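/- Let Σ be a finite alphabet, k ∈ ℕ, and w ∈ Σ* such that the Simon congruence class [w]_{∼_k} = { w' ∈ Σ* : w' ∼_k w } is infinite. Then there exists a letter x ∈ Σ such that x^k (the word consisting of k copies of x) is a scattered factor of w. -/

import Mathlib

open List

variable {α : Type*} [DecidableEq α] [Fintype α]

/-- Simon `k`-congruence: `u` and `v` have the same scattered factors
(subsequences) of length at most `k`. -/
def SimonCongr (k : ℕ) (u v : List α) : Prop :=
  ∀ s : List α, s.length ≤ k → (s.Sublist u ↔ s.Sublist v)

/-- `w` is `k`-universal with respect to the alphabet `S`: every word of length `k`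
over `S` is a scattered factor of `w`. -/
def UniversalOn (S : Finset α) (k : ℕ) (w : List α) : Prop :=
  ∀ s : List α, s.length = k → (∀ x ∈ s, x ∈ S) → s.Sublist w

/-- The universality index of `w` w.r.t. the alphabet `S`. -/
noncomputable def iotaOn (S : Finset α) (w : List α) : ℕ :=
  sSup {k | UniversalOn S k w}

/-- The universality index of `w` w.r.t. the full alphabet. -/
noncomputable def iotaUniv (w : List α) : ℕ := iotaOn Finset.univ w

/-- `a` is an arch w.r.t. `S`: it contains every letter of `S`, and its last letter
belongs to `S` and occurs exactly once in `a`. -/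
def IsArchOn (S : Finset α) (a : List α) : Prop :=
  (∀ x ∈ S, x ∈ a) ∧ ∃ a' x, a = a' ++ [x] ∧ x ∈ S ∧ x ∉ a'

/-- `(ars, r)` is the arch factorization of `w` w.r.t. `S`. -/
def IsArchFactOn (S : Finset α) (w : List α) (ars : List (List α)) (r : List α) : Prop :=
  w = ars.flatten ++ r ∧ (∀ a ∈ ars, IsArchOn S a) ∧ ¬ (∀ x ∈ S, x ∈ r)

/-- `(A, B)` is the α-β-factorization of `w` with `m` arches:
`αᵢ₋₁βᵢ` (for `i ∈ [m]`) together with rest `α_m` is the arch factorization of `w`, and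
`(β_{m-i}α_{m-i})^R` together with rest `α₀^R` is the arch factorization of `w^R`. -/
def IsAlphaBetaFact (w : List α) (m : ℕ) (A B : ℕ → List α) : Prop :=
  IsArchFactOn Finset.univ w (List.ofFn fun i : Fin m => A i.val ++ B (i.val + 1)) (A m) ∧
  IsArchFactOn Finset.univ w.reverse
    (List.ofFn fun i : Fin m => (B (m - i.val) ++ A (m - i.val)).reverse) ((A 0).reverse)

/-- The concatenation `αᵢ βᵢ₊₁ αᵢ₊₁ ⋯ βⱼ αⱼ`. -/
def abSeg (A B : ℕ → List α) (i j : ℕ) : List α :=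
  A i ++ (((List.Ico (i + 1) (j + 1)).map fun l => B l ++ A l).flatten)

/-- The core of a `β`-factor: the factor with its first and last letter removed. -/
def coreOf (b : List α) : List α := (b.drop 1).dropLast

/-- if the Simon congruence class of `w` is infinite, then `w`
contains `x^k` as a scattered factor for some letter `x`. -/
theorem infinite_class_contains_power (k : ℕ) (hk : 1 ≤ k) (w : List α)
    (h : {w' : List α | SimonCongr k w' w}.Infinite) :
    ∃ x : α, (List.replicate k x).Sublist w := by
  by_contra hx
  push_neg at hx
  apply h
  apply Set.Finite.subset (List.finite_length_le α ((k - 1) * Fintype.card α))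
  intro w' hw'
  simp only [Set.mem_setOf_eq] at hw' ⊢
  have hcount : ∀ x : α, w'.count x ≤ k - 1 := by
    intro x
    by_contra hc
    push_neg at hc
    have hk' : k ≤ w'.count x := by omega
    have hsub : (List.replicate k x).Sublist w' :=
      (List.replicate_sublist_iff).mpr hk'
    exact hx x (((hw' (List.replicate k x) (by simp)).mp hsub))
  calc w'.length = ∑ x ∈ w'.toFinset, w'.count x := by
        simpa using (Multiset.toFinset_sum_count_eq (w' : Multiset α)).symm
    _ ≤ ∑ _x ∈ w'.toFinset, (k - 1) := Finset.sum_le_sum fun x _ => hcount x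
    _ = w'.toFinset.card * (k - 1) := by rw [Finset.sum_const, smul_eq_mul]
    _ ≤ Fintype.card α * (k - 1) :=
        Nat.mul_le_mul_right _ (Finset.card_le_univ _)
    _ = (k - 1) * Fintype.card α := Nat.mul_comm _ _
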